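/- Let (C,·,n) be a Cayley algebra over a field k of characteristic ≠ 2, 3, equipped with a grading C = ⊕_{μ∈Z₂³} C_μ by the group Z₂³ = (Z/2)³ in which every homogeneous component C_μ is one-dimensional. For μ ∈ Z₂³ set o(C,n)_μ := {d ∈ o(C,n) : d(C_γ) ⊆ C_{γ+μ} for all γ ∈ Z₂³}. Then o(C,n) = ⊕_{μ∈Z₂³} o(C,n)_μ is a grading of the Lie algebra o(C,n), o(C,n)_0 = 0, and for every μ ≠ 0 the subspace o(C,n)_μ is a 4-dimensional Cartan subalgebra of o(C,n) (an abelian, hence nilpotent, self-normalizing Lie subalgebra). -/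

import Mathlib

open QuadraticMap

private noncomputable def Dmap {k C : Type*} [Field k] [AddCommGroup C] [Module k C]
    (b : Module.Basis (ZMod 2 × ZMod 2 × ZMod 2) k C)
    (μ : ZMod 2 × ZMod 2 × ZMod 2) (c : (ZMod 2 × ZMod 2 × ZMod 2) → k) : Module.End k C :=
  b.constr k fun γ => c γ • b (γ + μ)

private theorem Dmap_apply {k C : Type*} [Field k] [AddCommGroup C] [Module k C]
    (b : Module.Basis (ZMod 2 × ZMod 2 × ZMod 2) k C)
    (μ : ZMod 2 × ZMod 2 × ZMod 2) (c : (ZMod 2 × ZMod 2 × ZMod 2) → k)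
    (γ : ZMod 2 × ZMod 2 × ZMod 2) : Dmap b μ c (b γ) = c γ • b (γ + μ) :=
  b.constr_basis k _ γ

set_option maxHeartbeats 1000000 in
/-- a ℤ₂³-grading with one-dimensional components of a Cayley
algebra `(C,·,n)` (char k ≠ 2,3) induces a grading
`o(C,n) = ⊕_{μ} o(C,n)_μ` of the orthogonal Lie algebra, with
`o(C,n)_0 = 0` and each `o(C,n)_μ`, `μ ≠ 0`, a 4-dimensional Cartan
subalgebra (abelian and self-normalizing). -/
theorem cayley_z2cubed_grading_orthogonal_Lie
    {k : Type*} [Field k] {C : Type*} [AddCommGroup C] [Module k C]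
    (hchar2 : ringChar k ≠ 2) (hchar3 : ringChar k ≠ 3)
    (mul : C →ₗ[k] C →ₗ[k] C) (n : QuadraticForm k C)
    (hnondeg : ∀ x : C, (∀ y : C, polar n x y = 0) → x = 0)
    (hcomp : ∀ x y : C, n (mul x y) = n x * n y)
    (e : C) (hle : ∀ x : C, mul e x = x) (hre : ∀ x : C, mul x e = x)
    (hdim : Module.finrank k C = 8)
    (A : ZMod 2 × ZMod 2 × ZMod 2 → Submodule k C)
    (hdecomp : DirectSum.IsInternal A)
    (hgrmul : ∀ g h : ZMod 2 × ZMod 2 × ZMod 2,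
      ∀ x ∈ A g, ∀ y ∈ A h, mul x y ∈ A (g + h))
    (hone : ∀ g : ZMod 2 × ZMod 2 × ZMod 2, Module.finrank k (A g) = 1) :
    ∀ (inO : Module.End k C → Prop)
      (inOmu : (ZMod 2 × ZMod 2 × ZMod 2) → Module.End k C → Prop),
      (∀ d : Module.End k C,
        inO d ↔ ∀ x y : C, polar n (d x) y + polar n x (d y) = 0) →
      (∀ (μ : ZMod 2 × ZMod 2 × ZMod 2) (d : Module.End k C),
        inOmu μ d ↔ (inO d ∧ ∀ γ : ZMod 2 × ZMod 2 × ZMod 2,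
          ∀ z ∈ A γ, d z ∈ A (γ + μ))) →
      ( -- o(C,n) = ⊕_μ o(C,n)_μ
        (∀ d : Module.End k C, inO d →
          ∃! f : (ZMod 2 × ZMod 2 × ZMod 2) → Module.End k C,
            (∀ μ, inOmu μ (f μ)) ∧ d = ∑ μ : ZMod 2 × ZMod 2 × ZMod 2, f μ) ∧
        -- it is a grading of the Lie algebra
        (∀ (μ ν : ZMod 2 × ZMod 2 × ZMod 2) (d d' : Module.End k C),
          inOmu μ d → inOmu ν d' → inOmu (μ + ν) (d * d' - d' * d)) ∧
        -- o(C,n)_0 = 0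
        (∀ d : Module.End k C, inOmu 0 d → d = 0) ∧
        -- each o(C,n)_μ, μ ≠ 0, is a 4-dimensional Cartan subalgebra
        (∀ μ : ZMod 2 × ZMod 2 × ZMod 2, μ ≠ 0 →
          (∃ V : Submodule k (Module.End k C),
            (V : Set (Module.End k C)) = {d | inOmu μ d} ∧
            Module.finrank k V = 4) ∧
          (∀ d d' : Module.End k C, inOmu μ d → inOmu μ d' →
            d * d' = d' * d) ∧
          (∀ d : Module.End k C, inO d →
            (∀ d' : Module.End k C, inOmu μ d' → inOmu μ (d * d' - d' * d)) →
            inOmu μ d)) ) := by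
  intro inO inOmu hO hOmu
  classical
  haveI : FiniteDimensional k C := FiniteDimensional.of_finrank_pos (by omega)
  have two_ne : (2 : k) ≠ 0 := Ring.two_ne_zero hchar2
  have gg : ∀ g : ZMod 2 × ZMod 2 × ZMod 2, g + g = 0 := by decide
  have addc : ∀ γ μ : ZMod 2 × ZMod 2 × ZMod 2, γ + μ + μ = γ := fun γ μ => by
    rw [add_assoc, gg, add_zero]
  -- basis adapted to the grading
  obtain ⟨b, hb⟩ : { b : Module.Basis (ZMod 2 × ZMod 2 × ZMod 2) k C // ∀ γ, b γ ∈ A γ } := by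
    refine ⟨(hdecomp.collectedBasis fun γ => Module.finBasisOfFinrankEq k (A γ) (hone γ)).reindex
      (Equiv.sigmaUnique _ _), fun γ => ?_⟩
    rw [Module.Basis.reindex_apply]
    exact hdecomp.collectedBasis_mem _ ((Equiv.sigmaUnique _ _).symm γ)
  -- every A γ is the span of b γ
  have spanA : ∀ γ, A γ = Submodule.span k {b γ} := by
    intro γ
    refine (Submodule.eq_of_le_of_finrank_eq ?_ ?_).symm
    · rw [Submodule.span_le, Set.singleton_subset_iff]; exact hb γ
    · rw [finrank_span_singleton (b.ne_zero γ), hone γ]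
  have memA : ∀ {γ : ZMod 2 × ZMod 2 × ZMod 2} {x : C}, x ∈ A γ → x = b.repr x γ • b γ := by
    intro γ x hx
    rw [spanA γ, Submodule.mem_span_singleton] at hx
    obtain ⟨s, rfl⟩ := hx
    rw [_root_.map_smul, Finsupp.smul_apply, b.repr_self, Finsupp.single_eq_same, smul_eq_mul,
      mul_one]
  have memA' : ∀ {γ : ZMod 2 × ZMod 2 × ZMod 2} (s : k), s • b γ ∈ A γ := fun {γ} s =>
    Submodule.smul_mem _ s (hb γ)
  have memA0 : ∀ {γ l : ZMod 2 × ZMod 2 × ZMod 2} {x : C}, x ∈ A γ → l ≠ γ →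
      b.repr x l = 0 := by
    intro γ lam x hx hne
    rw [memA hx, _root_.map_smul, Finsupp.smul_apply, b.repr_self, smul_eq_mul,
      Finsupp.single_eq_of_ne' (Ne.symm hne), mul_zero]
  -- polar linearity helpers
  have pol_sum_left : ∀ (s : Finset (ZMod 2 × ZMod 2 × ZMod 2)) (f : _ → C) (w : C),
      polar n (∑ i ∈ s, f i) w = ∑ i ∈ s, polar n (f i) w := by
    intro s f w
    rw [← polarBilin_apply_apply, _root_.map_sum, LinearMap.sum_apply]
    simp only [polarBilin_apply_apply]
  have pol_sum_right : ∀ (s : Finset (ZMod 2 × ZMod 2 × ZMod 2)) (f : _ → C) (w : C),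
      polar n w (∑ i ∈ s, f i) = ∑ i ∈ s, polar n w (f i) := by
    intro s f w
    rw [← polarBilin_apply_apply, _root_.map_sum]
    simp only [polarBilin_apply_apply]
  have pol_smul_left : ∀ (a : k) (x y : C), polar n (a • x) y = a * polar n x y := by
    intro a x y; rw [polar_smul_left, smul_eq_mul]
  have pol_smul_right : ∀ (a : k) (x y : C), polar n x (a • y) = a * polar n x y := by
    intro a x y; rw [polar_smul_right, smul_eq_mul]
  -- coordinates of shifted sums
  have repr_sum_shift : ∀ (F : ZMod 2 × ZMod 2 × ZMod 2 → k) (h l : ZMod 2 × ZMod 2 × ZMod 2),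
      b.repr (∑ γ, F γ • b (γ + h)) l = F (l + h) := by
    intro F h l
    rw [_root_.map_sum, Finsupp.finset_sum_apply, Finset.sum_eq_single (l + h)]
    · rw [_root_.map_smul, Finsupp.smul_apply, b.repr_self, addc, Finsupp.single_eq_same,
        smul_eq_mul, mul_one]
    · intro γ _ hγ
      rw [_root_.map_smul, Finsupp.smul_apply, b.repr_self, smul_eq_mul,
        Finsupp.single_eq_of_ne', mul_zero]
      intro hc
      exact hγ (by rw [← hc, addc])
    · simp
  -- composition identities
  have hI0b : ∀ x y w : C, polar n (mul x y) (mul x w) = n x * polar n y w := by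
    intro x y w
    simp only [QuadraticMap.polar, ← map_add, hcomp]
    ring
  have hI1 : ∀ x y z w : C, polar n (mul x y) (mul z w) + polar n (mul z y) (mul x w)
      = polar n x z * polar n y w := by
    intro x y z w
    have h := hI0b (x + z) y w
    have hxy : mul (x + z) y = mul x y + mul z y := by rw [map_add, LinearMap.add_apply]
    have hxw : mul (x + z) w = mul x w + mul z w := by rw [map_add, LinearMap.add_apply]
    rw [hxy, hxw, polar_add_left, polar_add_right, polar_add_right, hI0b x y w, hI0b z y w] at h
    have hp : polar n x z = n (x + z) - n x - n z := rfl
    rw [hp]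
    linear_combination h
  -- the unit is homogeneous of degree 0
  obtain ⟨r, hr⟩ : ∃ r : ZMod 2 × ZMod 2 × ZMod 2 → k, ∀ γ, r γ = b.repr e γ :=
    ⟨_, fun _ => rfl⟩
  have he_sum : e = ∑ h, r h • b h := by
    simp only [hr]
    exact (b.sum_repr e).symm
  have heA0 : e ∈ A 0 := by
    have hmulmem : ∀ δ h : ZMod 2 × ZMod 2 × ZMod 2, mul (b δ) (b h) ∈ A (δ + h) := fun δ h =>
      hgrmul δ h _ (hb δ) _ (hb h)
    have hFz : ∀ h γ : ZMod 2 × ZMod 2 × ZMod 2, γ ≠ 0 →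
        r γ • mul (b γ) (b h) = 0 := by
      intro h γ hγ
      have hbh : (b h : C) = ∑ δ, (r δ * b.repr (mul (b δ) (b h)) (δ + h)) • b (δ + h) := by
        conv_lhs => rw [← hle (b h), he_sum, map_sum, LinearMap.sum_apply]
        refine Finset.sum_congr rfl fun δ _ => ?_
        conv_lhs => rw [_root_.map_smul, LinearMap.smul_apply, memA (hmulmem δ h)]
        rw [smul_smul]
      have h2 := congrArg (fun x => b.repr x (γ + h)) hbh
      try simp only at h2
      rw [repr_sum_shift, addc, b.repr_self, Finsupp.single_eq_of_ne'] at h2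
      · conv_lhs => rw [memA (hmulmem γ h)]
        rw [smul_smul, ← h2, zero_smul]
      · intro hc
        apply hγ
        have h3 := addc γ h
        rw [← hc, gg] at h3
        exact h3.symm
    have hrz : ∀ γ : ZMod 2 × ZMod 2 × ZMod 2, γ ≠ 0 → r γ = 0 := by
      intro γ hγ
      have h1 : r γ • b γ = ∑ h, r h • (r γ • mul (b γ) (b h)) := by
        conv_lhs => rw [← hre (b γ), he_sum, map_sum]
        rw [Finset.smul_sum]
        refine Finset.sum_congr rfl fun h _ => ?_
        rw [_root_.map_smul, smul_comm]
      have h2 : r γ • b γ = 0 := by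
        rw [h1]
        refine Finset.sum_eq_zero fun h _ => ?_
        rw [hFz h γ hγ, smul_zero]
      exact (smul_eq_zero.mp h2).resolve_right (b.ne_zero γ)
    have he : e = r 0 • b 0 := by
      rw [he_sum, Finset.sum_eq_single 0]
      · intro γ _ hγ
        rw [hrz γ hγ, zero_smul]
      · simp
    rw [he]
    exact memA' _
  -- generic Cayley-Hamilton identity
  have hCH : ∀ x : C, mul x x = polar n x e • x - n x • e := by
    intro x
    have key : ∀ w : C, polar n (mul x x - (polar n x e • x - n x • e)) w = 0 := by
      intro w
      have h1 := hI1 x x e w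
      rw [hle w, hle x] at h1
      have h2 := hI0b x e w
      rw [hre x] at h2
      rw [polar_sub_left, polar_sub_left, pol_smul_left, pol_smul_left]
      linear_combination h1 - h2
    exact sub_eq_zero.mp (hnondeg _ key)
  -- the trace form vanishes on nonzero degrees
  have tb : ∀ γ : ZMod 2 × ZMod 2 × ZMod 2, γ ≠ 0 → polar n (b γ) e = 0 := by
    intro γ hγ
    have h1 := hCH (b γ)
    have hmem : mul (b γ) (b γ) ∈ A 0 := by
      have := hgrmul γ γ _ (hb γ) _ (hb γ)
      rwa [gg] at this
    have h2 := congrArg (fun x => b.repr x γ) h1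
    try simp only at h2
    rw [memA0 hmem hγ, _root_.map_sub, _root_.map_smul, _root_.map_smul, Finsupp.sub_apply,
      Finsupp.smul_apply, Finsupp.smul_apply, b.repr_self, Finsupp.single_eq_same,
      memA0 heA0 hγ, smul_eq_mul, smul_eq_mul, mul_one, mul_zero, sub_zero] at h2
    exact h2.symm
  -- distinct homogeneous components are orthogonal
  have horth : ∀ γ δ : ZMod 2 × ZMod 2 × ZMod 2, γ ≠ δ → polar n (b γ) (b δ) = 0 := by
    intro γ δ hne
    have h := hI1 (b γ) (b δ) e e
    rw [hle e, hle (b δ), hre (b γ)] at h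
    have hmm : mul (b γ) (b δ) ∈ A (γ + δ) := hgrmul _ _ _ (hb γ) _ (hb δ)
    have hgd : γ + δ ≠ 0 := by
      intro hc
      have h2 := addc γ δ
      rw [hc, zero_add] at h2
      exact hne h2.symm
    have h3 : polar n (mul (b γ) (b δ)) e = 0 := by
      rw [memA hmm, pol_smul_left, tb _ hgd, mul_zero]
    have h4 : polar n (b γ) e * polar n (b δ) e = 0 := by
      rcases eq_or_ne γ 0 with rfl | hγ
      · rw [tb δ (Ne.symm hne), mul_zero]
      · rw [tb γ hγ, zero_mul]
    rw [h3, h4, zero_add] at h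
    rw [polar_comm]
    exact h
  -- the norms of basis vectors do not vanish
  have q_ne : ∀ γ : ZMod 2 × ZMod 2 × ZMod 2, n (b γ) ≠ 0 := by
    intro γ hq0
    refine b.ne_zero γ (hnondeg _ ?_)
    intro y
    rw [show y = ∑ δ, b.repr y δ • b δ from (b.sum_repr y).symm, pol_sum_right]
    refine Finset.sum_eq_zero fun δ _ => ?_
    rw [pol_smul_right]
    rcases eq_or_ne γ δ with rfl | hne
    · rw [polar_self, hq0, smul_zero, mul_zero]
    · rw [horth γ δ hne, mul_zero]
  have polar_basisR : ∀ (x : C) (δ : ZMod 2 × ZMod 2 × ZMod 2),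
      polar n x (b δ) = b.repr x δ * (2 * n (b δ)) := by
    intro x δ
    conv_lhs => rw [show x = ∑ γ, b.repr x γ • b γ from (b.sum_repr x).symm]
    rw [pol_sum_left, Finset.sum_eq_single δ]
    · rw [pol_smul_left, polar_self, two_nsmul]
      ring
    · intro γ _ hγ
      rw [pol_smul_left, horth γ δ hγ, mul_zero]
    · simp
  have polar_basisL : ∀ (x : C) (δ : ZMod 2 × ZMod 2 × ZMod 2),
      polar n (b δ) x = b.repr x δ * (2 * n (b δ)) := by
    intro x δ
    rw [polar_comm]
    exact polar_basisR x δ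
  -- expansion of endomorphism application
  have happly : ∀ (d : Module.End k C) (x : C), d x = ∑ γ, b.repr x γ • d (b γ) := by
    intro d x
    conv_lhs => rw [← b.sum_repr x, map_sum]
    exact Finset.sum_congr rfl fun γ _ => _root_.map_smul d _ _
  have expandR : ∀ u y : C, polar n u y = ∑ δ, b.repr y δ * polar n u (b δ) := by
    intro u y
    conv_lhs => rw [← b.sum_repr y]
    rw [pol_sum_right]
    exact Finset.sum_congr rfl fun δ _ => pol_smul_right _ _ _
  -- skew-adjointness can be checked on the basis
  have hO_basis : ∀ d : Module.End k C,
      (∀ γ δ, polar n (d (b γ)) (b δ) + polar n (b γ) (d (b δ)) = 0) → inO d := by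
    intro d hd
    rw [hO]
    intro x y
    have e1 : polar n (d x) y
        = ∑ γ, ∑ δ, b.repr x γ * (b.repr y δ * polar n (d (b γ)) (b δ)) := by
      rw [happly d x, pol_sum_left]
      refine Finset.sum_congr rfl fun γ _ => ?_
      rw [pol_smul_left, expandR (d (b γ)) y, Finset.mul_sum]
    have e2 : polar n x (d y)
        = ∑ γ, ∑ δ, b.repr x γ * (b.repr y δ * polar n (b γ) (d (b δ))) := by
      conv_lhs => rw [← b.sum_repr x]
      rw [pol_sum_left]
      refine Finset.sum_congr rfl fun γ _ => ?_
      rw [pol_smul_left, happly d y, pol_sum_right, Finset.mul_sum]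
      refine congrArg _ ?_
      funext δ
      rw [pol_smul_right]
    rw [e1, e2, ← Finset.sum_add_distrib]
    refine Finset.sum_eq_zero fun γ _ => ?_
    rw [← Finset.sum_add_distrib]
    refine Finset.sum_eq_zero fun δ _ => ?_
    linear_combination (b.repr x γ * b.repr y δ) * hd γ δ
  -- the fundamental coefficient relation for skew transformations
  have skewrel : ∀ (d : Module.End k C), inO d →
      ∀ (μ γ : ZMod 2 × ZMod 2 × ZMod 2),
      b.repr (d (b γ)) (γ + μ) * n (b (γ + μ)) + b.repr (d (b (γ + μ))) γ * n (b γ) = 0 := by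
    intro d hd μ γ
    have h := (hO d).mp hd (b γ) (b (γ + μ))
    rw [polar_basisR (d (b γ)) (γ + μ), polar_comm, polar_basisR (d (b (γ + μ))) γ] at h
    have h2 : (2:k) * (b.repr (d (b γ)) (γ + μ) * n (b (γ + μ))
        + b.repr (d (b (γ + μ))) γ * n (b γ)) = 0 := by
      linear_combination h
    exact (mul_eq_zero.mp h2).resolve_left two_ne
  -- properties of the constructor Dmap
  have hDgr : ∀ (μ : ZMod 2 × ZMod 2 × ZMod 2) (c : ZMod 2 × ZMod 2 × ZMod 2 → k)
      (γ : ZMod 2 × ZMod 2 × ZMod 2) (z : C), z ∈ A γ → Dmap b μ c z ∈ A (γ + μ) := by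
    intro μ c γ z hz
    rw [memA hz, _root_.map_smul, Dmap_apply, smul_smul]
    exact memA' _
  have hDmu : ∀ (μ : ZMod 2 × ZMod 2 × ZMod 2) (c : ZMod 2 × ZMod 2 × ZMod 2 → k),
      (∀ γ, c γ * n (b (γ + μ)) + c (γ + μ) * n (b γ) = 0) → inOmu μ (Dmap b μ c) := by
    intro μ c hc
    rw [hOmu]
    constructor
    · refine hO_basis _ fun α β => ?_
      rw [Dmap_apply, Dmap_apply, pol_smul_left, pol_smul_right]
      rcases eq_or_ne (α + μ) β with rfl | hβ
      · rw [addc, polar_self, polar_self, two_nsmul, two_nsmul]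
        linear_combination 2 * hc α
      · have hβ' : α ≠ β + μ := fun hcon => hβ (by rw [hcon, addc])
        rw [horth _ _ hβ, horth _ _ hβ', mul_zero, mul_zero, add_zero]
    · exact fun γ z hz => hDgr μ c γ z hz
  -- every element of o(C,n)_μ is of the form Dmap
  have hrep : ∀ (μ : ZMod 2 × ZMod 2 × ZMod 2) (d : Module.End k C), inOmu μ d →
      d = Dmap b μ (fun γ => b.repr (d (b γ)) (γ + μ)) := by
    intro μ d hd
    refine b.ext fun γ => ?_
    rw [Dmap_apply]
    exact memA (((hOmu μ d).mp hd).2 γ (b γ) (hb γ))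
  -- second shifted-sum coordinate lemma
  have repr_sum_shift' : ∀ (F : ZMod 2 × ZMod 2 × ZMod 2 → k) (h l : ZMod 2 × ZMod 2 × ZMod 2),
      b.repr (∑ γ, F γ • b (h + γ)) l = F (h + l) := by
    intro F h l
    rw [_root_.map_sum, Finsupp.finset_sum_apply, Finset.sum_eq_single (h + l)]
    · rw [_root_.map_smul, Finsupp.smul_apply, ← add_assoc, gg, zero_add, b.repr_self,
        Finsupp.single_eq_same, smul_eq_mul, mul_one]
    · intro γ _ hγ
      rw [_root_.map_smul, Finsupp.smul_apply, b.repr_self, smul_eq_mul,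
        Finsupp.single_eq_of_ne', mul_zero]
      intro hc
      exact hγ (by rw [← hc, ← add_assoc, gg, zero_add])
    · simp
  -- the degree-zero component of the orthogonal algebra vanishes
  have ozero : ∀ d : Module.End k C, inOmu 0 d → d = 0 := by
    intro d hd
    obtain ⟨hdO, hdgr⟩ := (hOmu 0 d).mp hd
    refine b.ext fun γ => ?_
    have h := skewrel d hdO 0 γ
    rw [add_zero] at h
    have hc : b.repr (d (b γ)) γ = 0 := by
      have h2 : b.repr (d (b γ)) γ * (2 * n (b γ)) = 0 := by linear_combination h
      exact (mul_eq_zero.mp h2).resolve_right (mul_ne_zero two_ne (q_ne γ))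
    have hmem : d (b γ) ∈ A γ := by
      have := hdgr γ (b γ) (hb γ)
      rwa [add_zero] at this
    rw [LinearMap.zero_apply, memA hmem, hc, zero_smul]
  -- Part 1: decomposition into homogeneous components
  have part1 : ∀ d : Module.End k C, inO d →
      ∃! f : (ZMod 2 × ZMod 2 × ZMod 2) → Module.End k C,
        (∀ μ, inOmu μ (f μ)) ∧ d = ∑ μ : ZMod 2 × ZMod 2 × ZMod 2, f μ := by
    intro d hd
    refine ⟨fun μ => Dmap b μ (fun γ => b.repr (d (b γ)) (γ + μ)), ⟨?_, ?_⟩, ?_⟩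
    · intro μ
      refine hDmu μ _ fun γ => ?_
      show b.repr (d (b γ)) (γ + μ) * n (b (γ + μ))
          + b.repr (d (b (γ + μ))) (γ + μ + μ) * n (b γ) = 0
      rw [addc]
      exact skewrel d hd μ γ
    · refine b.ext fun γ => ?_
      rw [LinearMap.sum_apply]
      have h1 : ∑ μ : ZMod 2 × ZMod 2 × ZMod 2,
            (Dmap b μ fun γ' => b.repr (d (b γ')) (γ' + μ)) (b γ)
          = ∑ μ : ZMod 2 × ZMod 2 × ZMod 2, b.repr (d (b γ)) (γ + μ) • b (γ + μ) :=
        Finset.sum_congr rfl fun μ _ => Dmap_apply b μ _ γ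
      have h2 : ∑ μ : ZMod 2 × ZMod 2 × ZMod 2, b.repr (d (b γ)) (γ + μ) • b (γ + μ)
          = ∑ δ : ZMod 2 × ZMod 2 × ZMod 2, b.repr (d (b γ)) δ • b δ := by
        refine Fintype.sum_equiv (Equiv.addLeft γ) _ _ fun μ => ?_
        simp only [Equiv.coe_addLeft]
      rw [h1, h2, b.sum_repr]
    · rintro f ⟨hf1, hf2⟩
      funext μ
      refine (b.ext fun γ => ?_).symm
      rw [Dmap_apply]
      have hfm : ∀ ν, f ν (b γ) = b.repr (f ν (b γ)) (γ + ν) • b (γ + ν) := fun ν =>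
        memA (((hOmu ν (f ν)).mp (hf1 ν)).2 γ (b γ) (hb γ))
      have hdg : d (b γ) = ∑ ν, b.repr (f ν (b γ)) (γ + ν) • b (γ + ν) := by
        rw [hf2, LinearMap.sum_apply]
        exact Finset.sum_congr rfl fun ν _ => hfm ν
      have hco : b.repr (d (b γ)) (γ + μ) = b.repr (f μ (b γ)) (γ + μ) := by
        rw [hdg, repr_sum_shift', ← add_assoc, gg, zero_add]
      rw [hco, ← hfm μ]
  -- Part 2: the bracket respects the grading
  have part2 : ∀ (μ ν : ZMod 2 × ZMod 2 × ZMod 2) (d d' : Module.End k C),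
      inOmu μ d → inOmu ν d' → inOmu (μ + ν) (d * d' - d' * d) := by
    intro μ ν d d' hd hd'
    obtain ⟨hdO, hdg⟩ := (hOmu μ d).mp hd
    obtain ⟨hdO', hdg'⟩ := (hOmu ν d').mp hd'
    rw [hO] at hdO hdO'
    rw [hOmu]
    constructor
    · rw [hO]
      intro x y
      have c1 : ∀ u v : C, polar n (d u) v = - polar n u (d v) := fun u v => by
        linear_combination hdO u v
      have c1' : ∀ u v : C, polar n (d' u) v = - polar n u (d' v) := fun u v => by
        linear_combination hdO' u v
      have e1 : (d * d' - d' * d) x = d (d' x) - d' (d x) := rfl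
      have e2 : (d * d' - d' * d) y = d (d' y) - d' (d y) := rfl
      rw [e1, e2, polar_sub_left, polar_sub_right]
      have u1 : polar n (d (d' x)) y = polar n x (d' (d y)) := by
        linear_combination c1 (d' x) y - c1' x (d y)
      have u2 : polar n (d' (d x)) y = polar n x (d (d' y)) := by
        linear_combination c1' (d x) y - c1 x (d' y)
      linear_combination u1 - u2
    · intro γ z hz
      have m2 : d (d' z) ∈ A (γ + ν + μ) := hdg _ _ (hdg' γ z hz)
      have m4 : d' (d z) ∈ A (γ + μ + ν) := hdg' _ _ (hdg γ z hz)
      have hEq : γ + ν + μ = γ + (μ + ν) := by abel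
      have hEq2 : γ + μ + ν = γ + (μ + ν) := by abel
      rw [hEq] at m2
      rw [hEq2] at m4
      show d (d' z) - d' (d z) ∈ A (γ + (μ + ν))
      exact Submodule.sub_mem _ m2 m4
  -- Part 4
  have part4 : ∀ μ : ZMod 2 × ZMod 2 × ZMod 2, μ ≠ 0 →
      (∃ V : Submodule k (Module.End k C),
        (V : Set (Module.End k C)) = {d | inOmu μ d} ∧
        Module.finrank k V = 4) ∧
      (∀ d d' : Module.End k C, inOmu μ d → inOmu μ d' →
        d * d' = d' * d) ∧
      (∀ d : Module.End k C, inO d →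
        (∀ d' : Module.End k C, inOmu μ d' → inOmu μ (d * d' - d' * d)) →
        inOmu μ d) := by
    intro μ hμ
    have hμadd : ∀ γ : ZMod 2 × ZMod 2 × ZMod 2, γ + μ ≠ γ := by
      intro γ hcon
      exact hμ (add_left_cancel (a := γ) (by rw [add_zero]; exact hcon))
    refine ⟨?_, ?_, ?_⟩
    · -- 4-dimensionality
      obtain ⟨ord⟩ : Nonempty ((ZMod 2 × ZMod 2 × ZMod 2) ≃ Fin 8) :=
        ⟨Fintype.equivFinOfCardEq (by decide)⟩
      set R : Finset (ZMod 2 × ZMod 2 × ZMod 2) :=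
        Finset.filter (fun γ => ord γ < ord (γ + μ)) Finset.univ with hR
      have hRmem : ∀ γ, γ ∈ R ↔ ord γ < ord (γ + μ) := by
        intro γ
        simp [hR]
      have hRc : ∀ γ, γ ∉ R → γ + μ ∈ R := by
        intro γ hγ
        rw [hRmem] at hγ ⊢
        rw [addc]
        have hne : ord (γ + μ) ≠ ord γ := fun hcon => hμadd γ (ord.injective hcon)
        exact lt_of_le_of_ne (not_lt.mp hγ) hne
      have hRR : ∀ γ, γ ∈ R → γ + μ ∉ R := by
        intro γ hγ hcon
        rw [hRmem] at hγ hcon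
        rw [addc] at hcon
        exact absurd hcon (lt_asymm hγ)
      have hcard : R.card = 4 := by
        have hbij : R.card
            = (Finset.filter (fun γ => ¬ ord γ < ord (γ + μ)) Finset.univ).card := by
          refine Finset.card_bij (fun γ _ => γ + μ) ?_ ?_ ?_
          · intro γ hγ
            rw [Finset.mem_filter]
            refine ⟨Finset.mem_univ _, ?_⟩
            rw [← hRmem]
            exact hRR γ hγ
          · intro γ1 h1 γ2 h2 hc
            exact add_right_cancel hc
          · intro δ hδ
            rw [Finset.mem_filter] at hδ
            have hδ' : δ ∉ R := by
              rw [hRmem]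
              exact hδ.2
            exact ⟨δ + μ, hRc δ hδ', addc δ μ⟩
        have htot := Finset.card_filter_add_card_filter_not
          (s := (Finset.univ : Finset (ZMod 2 × ZMod 2 × ZMod 2)))
          (p := fun γ => ord γ < ord (γ + μ))
        have huniv : (Finset.univ : Finset (ZMod 2 × ZMod 2 × ZMod 2)).card = 8 := by decide
        rw [huniv] at htot
        rw [hR] at hbij ⊢
        omega
      set V : Submodule k (Module.End k C) :=
        { carrier := {d | inOmu μ d}
          add_mem' := by
            intro d d' hd hd'
            obtain ⟨h1, h2⟩ := (hOmu μ d).mp hd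
            obtain ⟨h1', h2'⟩ := (hOmu μ d').mp hd'
            rw [hO] at h1 h1'
            refine (hOmu μ (d + d')).mpr ⟨(hO _).mpr fun x y => ?_, fun γ z hz => ?_⟩
            · rw [LinearMap.add_apply, LinearMap.add_apply, polar_add_left, polar_add_right]
              linear_combination h1 x y + h1' x y
            · rw [LinearMap.add_apply]
              exact Submodule.add_mem _ (h2 γ z hz) (h2' γ z hz)
          zero_mem' := by
            refine (hOmu μ 0).mpr ⟨(hO _).mpr fun x y => ?_, fun γ z hz => ?_⟩
            · rw [LinearMap.zero_apply, LinearMap.zero_apply, polar_zero_left, polar_zero_right]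
              ring
            · rw [LinearMap.zero_apply]
              exact Submodule.zero_mem _
          smul_mem' := by
            intro a d hd
            obtain ⟨h1, h2⟩ := (hOmu μ d).mp hd
            rw [hO] at h1
            refine (hOmu μ (a • d)).mpr ⟨(hO _).mpr fun x y => ?_, fun γ z hz => ?_⟩
            · rw [LinearMap.smul_apply, LinearMap.smul_apply, pol_smul_left, pol_smul_right]
              linear_combination a * h1 x y
            · rw [LinearMap.smul_apply]
              exact Submodule.smul_mem _ a (h2 γ z hz) } with hV
      refine ⟨V, rfl, ?_⟩
      have hVmem : ∀ d : V, inOmu μ (d : Module.End k C) := fun d => d.2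
      let Φ : V →ₗ[k] (↥R → k) :=
        { toFun := fun d ρ => b.repr ((d : Module.End k C) (b ρ.1)) (ρ.1 + μ)
          map_add' := fun d d' => funext fun ρ => by
            simp only [Submodule.coe_add, LinearMap.add_apply, _root_.map_add,
              Finsupp.add_apply, Pi.add_apply]
          map_smul' := fun a d => funext fun ρ => by
            simp only [Submodule.coe_smul, LinearMap.smul_apply, _root_.map_smul,
              Finsupp.smul_apply, smul_eq_mul, Pi.smul_apply, RingHom.id_apply] }
      have hker : ∀ d : V, Φ d = 0 → d = 0 := by
        intro d hd
        have hcoef : ∀ γ, b.repr ((d : Module.End k C) (b γ)) (γ + μ) = 0 := by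
          intro γ
          by_cases hγ : γ ∈ R
          · exact congrFun hd ⟨γ, hγ⟩
          · have hγ' : γ + μ ∈ R := hRc γ hγ
            have hz' : b.repr ((d : Module.End k C) (b (γ + μ))) (γ + μ + μ) = 0 :=
              congrFun hd ⟨γ + μ, hγ'⟩
            rw [addc] at hz'
            have hsk := skewrel (d : Module.End k C) ((hOmu μ _).mp (hVmem d)).1 μ γ
            rw [hz', zero_mul, add_zero] at hsk
            exact (mul_eq_zero.mp hsk).resolve_right (q_ne _)
        have hz : (d : Module.End k C) = 0 := by
          refine b.ext fun γ => ?_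
          have hm := ((hOmu μ _).mp (hVmem d)).2 γ (b γ) (hb γ)
          rw [memA hm, hcoef γ, zero_smul, LinearMap.zero_apply]
        exact Subtype.ext hz
      have hinj : Function.Injective Φ := by
        intro d d' hdd
        have h0 : Φ (d - d') = 0 := by rw [_root_.map_sub, hdd, sub_self]
        exact sub_eq_zero.mp (hker _ h0)
      have hsurj : Function.Surjective Φ := by
        intro a
        have hcdef : ∃ c : ZMod 2 × ZMod 2 × ZMod 2 → k, ∀ γ,
            c γ = if h : γ ∈ R then a ⟨γ, h⟩
              else - a ⟨γ + μ, hRc γ h⟩ * n (b γ) / n (b (γ + μ)) := ⟨_, fun _ => rfl⟩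
        obtain ⟨c, hc⟩ := hcdef
        have hcR : ∀ γ (h : γ ∈ R), c γ = a ⟨γ, h⟩ := by
          intro γ h
          rw [hc, dif_pos h]
        have hcN : ∀ γ (h : γ ∉ R), c γ = - a ⟨γ + μ, hRc γ h⟩ * n (b γ) / n (b (γ + μ)) := by
          intro γ h
          rw [hc, dif_neg h]
        have hcrel : ∀ γ, c γ * n (b (γ + μ)) + c (γ + μ) * n (b γ) = 0 := by
          intro γ
          by_cases hγ : γ ∈ R
          · have hγ' : γ + μ ∉ R := hRR γ hγ
            rw [hcR γ hγ, hcN _ hγ']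
            have hsub : (⟨γ + μ + μ, hRc _ hγ'⟩ : ↥R) = ⟨γ, hγ⟩ := Subtype.ext (addc γ μ)
            rw [hsub, addc, div_mul_cancel₀ _ (q_ne γ)]
            ring
          · have hγ' : γ + μ ∈ R := hRc γ hγ
            rw [hcN γ hγ, hcR _ hγ', div_mul_cancel₀ _ (q_ne (γ + μ))]
            ring
        refine ⟨⟨Dmap b μ c, hDmu μ c hcrel⟩, ?_⟩
        funext ρ
        show b.repr (Dmap b μ c (b ρ.1)) (ρ.1 + μ) = a ρ
        rw [Dmap_apply, _root_.map_smul, Finsupp.smul_apply, b.repr_self,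
          Finsupp.single_eq_same, smul_eq_mul, mul_one, hcR ρ.1 ρ.2]
      rw [(LinearEquiv.ofBijective Φ ⟨hinj, hsurj⟩).finrank_eq, Module.finrank_pi,
        Fintype.card_coe, hcard]
    · -- abelian
      intro d d' hd hd'
      have hrel := fun γ => skewrel d ((hOmu μ d).mp hd).1 μ γ
      have hrel' := fun γ => skewrel d' ((hOmu μ d').mp hd').1 μ γ
      refine b.ext fun γ => ?_
      have hm : d (b γ) ∈ A (γ + μ) := ((hOmu μ d).mp hd).2 γ (b γ) (hb γ)
      have hm' : d' (b γ) ∈ A (γ + μ) := ((hOmu μ d').mp hd').2 γ (b γ) (hb γ)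
      have hmm : d (b (γ + μ)) ∈ A (γ + μ + μ) := ((hOmu μ d).mp hd).2 _ (b (γ + μ)) (hb _)
      have hmm' : d' (b (γ + μ)) ∈ A (γ + μ + μ) := ((hOmu μ d').mp hd').2 _ (b (γ + μ)) (hb _)
      rw [addc] at hmm hmm'
      have e1 : (d * d') (b γ)
          = (b.repr (d' (b γ)) (γ + μ) * b.repr (d (b (γ + μ))) γ) • b γ := by
        show d (d' (b γ)) = _
        conv_lhs => rw [memA hm']
        rw [_root_.map_smul]
        conv_lhs => rw [memA hmm]
        rw [smul_smul]
      have e2 : (d' * d) (b γ)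
          = (b.repr (d (b γ)) (γ + μ) * b.repr (d' (b (γ + μ))) γ) • b γ := by
        show d' (d (b γ)) = _
        conv_lhs => rw [memA hm]
        rw [_root_.map_smul]
        conv_lhs => rw [memA hmm']
        rw [smul_smul]
      rw [e1, e2]
      have hs : b.repr (d' (b γ)) (γ + μ) * b.repr (d (b (γ + μ))) γ
          = b.repr (d (b γ)) (γ + μ) * b.repr (d' (b (γ + μ))) γ := by
        have hcancel : (b.repr (d' (b γ)) (γ + μ) * b.repr (d (b (γ + μ))) γ) * n (b γ)
            = (b.repr (d (b γ)) (γ + μ) * b.repr (d' (b (γ + μ))) γ) * n (b γ) := by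
          linear_combination b.repr (d' (b γ)) (γ + μ) * hrel γ
            - b.repr (d (b γ)) (γ + μ) * hrel' γ
        exact mul_right_cancel₀ (q_ne γ) hcancel
      rw [hs]
    · -- self-normalizing
      intro d hdO hnorm
      rw [hOmu]
      refine ⟨hdO, ?_⟩
      have hdiag : ∀ α, b.repr (d (b α)) α = 0 := by
        intro α
        have h := (hO d).mp hdO (b α) (b α)
        rw [polar_basisR, polar_comm, polar_basisR] at h
        have h2 : b.repr (d (b α)) α * (2 * (2 * n (b α))) = 0 := by linear_combination h
        exact (mul_eq_zero.mp h2).resolve_right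
          (mul_ne_zero two_ne (mul_ne_zero two_ne (q_ne α)))
      have hpair : ∀ β₀ : ZMod 2 × ZMod 2 × ZMod 2, ∃ c : ZMod 2 × ZMod 2 × ZMod 2 → k,
          (∀ γ, c γ * n (b (γ + μ)) + c (γ + μ) * n (b γ) = 0) ∧ c β₀ = 1 ∧
          (∀ γ, γ ≠ β₀ → γ ≠ β₀ + μ → c γ = 0) := by
        intro β₀
        obtain ⟨c, hcdef⟩ : ∃ c : ZMod 2 × ZMod 2 × ZMod 2 → k, ∀ γ,
            c γ = if γ = β₀ then 1
              else if γ = β₀ + μ then - n (b (β₀ + μ)) / n (b β₀) else 0 :=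
          ⟨_, fun _ => rfl⟩
        refine ⟨c, ?_, ?_, ?_⟩
        · intro γ
          rcases eq_or_ne γ β₀ with rfl | h1
          · rw [hcdef γ, if_pos rfl, hcdef (γ + μ), if_neg (hμadd γ), if_pos rfl,
              div_mul_cancel₀ _ (q_ne γ)]
            ring
          · rcases eq_or_ne γ (β₀ + μ) with rfl | h2
            · rw [addc, hcdef (β₀ + μ), if_neg h1, if_pos rfl, hcdef β₀, if_pos rfl,
                div_mul_cancel₀ _ (q_ne β₀)]
              ring
            · have h3 : γ + μ ≠ β₀ := by
                intro hcon
                exact h2 (by rw [← hcon, addc])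
              have h4 : γ + μ ≠ β₀ + μ := fun hcon => h1 (add_right_cancel hcon)
              rw [hcdef γ, if_neg h1, if_neg h2, hcdef (γ + μ), if_neg h3, if_neg h4]
              ring
        · rw [hcdef β₀, if_pos rfl]
        · intro γ hg1 hg2
          rw [hcdef γ, if_neg hg1, if_neg hg2]
      have hoff : ∀ α β, β ≠ α + μ → b.repr (d (b α)) β = 0 := by
        intro α β hβ
        rcases eq_or_ne β α with rfl | hβα
        · exact hdiag β
        · obtain ⟨c, hcrel, hc1, hc0⟩ := hpair β
          have hcomm := hnorm (Dmap b μ c) (hDmu μ c hcrel)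
          have hgr := ((hOmu μ _).mp hcomm).2 α (b α) (hb α)
          have hval : (d * Dmap b μ c - Dmap b μ c * d) (b α)
              = c α • d (b (α + μ)) - ∑ δ, (b.repr (d (b α)) δ * c δ) • b (δ + μ) := by
            show d (Dmap b μ c (b α)) - Dmap b μ c (d (b α)) = _
            rw [Dmap_apply, _root_.map_smul]
            congr 1
            rw [happly (Dmap b μ c) (d (b α))]
            refine Finset.sum_congr rfl fun δ _ => ?_
            rw [Dmap_apply, smul_smul]
          have hsum : b.repr ((d * Dmap b μ c - Dmap b μ c * d) (b α)) (β + μ)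
              = c α * b.repr (d (b (α + μ))) (β + μ) - b.repr (d (b α)) β * c β := by
            rw [hval, _root_.map_sub, Finsupp.sub_apply, _root_.map_smul, Finsupp.smul_apply,
              smul_eq_mul, repr_sum_shift, addc]
          have hne' : β + μ ≠ α + μ := fun hcon => hβα (add_right_cancel hcon)
          have hz : (0 : k) = c α * b.repr (d (b (α + μ))) (β + μ) - b.repr (d (b α)) β * c β := by
            rw [← hsum]
            exact (memA0 hgr hne').symm
          have hα2 : α ≠ β + μ := by
            intro hcon
            exact hβ (by rw [hcon, addc])
          rw [hc0 α (Ne.symm hβα) hα2, hc1, zero_mul, mul_one] at hz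
          linear_combination hz
      intro γ z hz
      rw [memA hz, _root_.map_smul]
      refine Submodule.smul_mem _ _ ?_
      have hexp : d (b γ) = b.repr (d (b γ)) (γ + μ) • b (γ + μ) := by
        conv_lhs => rw [← b.sum_repr (d (b γ))]
        rw [Finset.sum_eq_single (γ + μ)]
        · intro δ _ hδ
          rw [hoff γ δ hδ, zero_smul]
        · simp
      rw [hexp]
      exact memA' _
  exact ⟨part1, part2, ozero, part4⟩
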